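/- Assume 0 < κ < 2. Then for all θ ∈ ℝ, H₁(π/4) = −κ/8 ≤ H₁(θ) ≤ H₁(3π/4) = 1 − κ/8, i.e. θ = π/4 is a global minimum and θ = 3π/4 is a global maximum of H₁. -/
import Mathlib


/-- For `0 < κ < 2`, `θ = π/4` is a global minimum of `H₁` with value `-κ/8` and
`θ = 3π/4` is a global maximum with value `1 - κ/8`. -/
theorem stmt_4 (κ : ℝ) (h1 : 0 < κ) (h2 : κ < 2)
    (H₁ : ℝ → ℝ)
    (hH : ∀ θ, H₁ θ = (Real.cos θ - Real.sin θ) ^ 2 / 2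
        - κ / 4 * (Real.cos θ ^ 4 + Real.sin θ ^ 4)) :
    H₁ (Real.pi / 4) = -κ / 8 ∧ H₁ (3 * Real.pi / 4) = 1 - κ / 8 ∧
    ∀ θ : ℝ, H₁ (Real.pi / 4) ≤ H₁ θ ∧ H₁ θ ≤ H₁ (3 * Real.pi / 4) := by
  have h3 : (3 : ℝ) * Real.pi / 4 = Real.pi - Real.pi / 4 := by ring
  have hs2 : Real.sqrt 2 ^ 2 = 2 := Real.sq_sqrt (by norm_num)
  have hmin : H₁ (Real.pi / 4) = -κ / 8 := by
    rw [hH, Real.cos_pi_div_four, Real.sin_pi_div_four]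
    linear_combination (-κ/32*(Real.sqrt 2^2+2)) * hs2
  have hmax : H₁ (3 * Real.pi / 4) = 1 - κ / 8 := by
    rw [hH, h3, Real.cos_pi_sub, Real.sin_pi_sub,
      Real.cos_pi_div_four, Real.sin_pi_div_four]
    linear_combination (1/2 - κ/32*(Real.sqrt 2^2+2)) * hs2
  refine ⟨hmin, hmax, fun θ => ?_⟩
  rw [hmin, hmax, hH θ]
  have hpyth : Real.sin θ ^ 2 + Real.cos θ ^ 2 = 1 := Real.sin_sq_add_cos_sq θ
  have hb : |Real.sin θ * Real.cos θ| ≤ 1 / 2 := by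
    have := Real.abs_sin_le_one (2 * θ)
    rw [Real.sin_two_mul] at this
    rw [abs_le] at this ⊢
    constructor <;> nlinarith [this.1, this.2]
  rw [abs_le] at hb
  set s := Real.sin θ
  set c := Real.cos θ
  have key1 : (1/2 - s*c) * (1 - κ/2*(s*c + 1/2)) ≥ 0 :=
    mul_nonneg (by linarith [hb.2]) (by nlinarith [hb.1, hb.2])
  have key2 : (s*c + 1/2) * (1 + κ/2*(1/2 - s*c)) ≥ 0 :=
    mul_nonneg (by linarith [hb.1]) (by nlinarith [hb.2])
  have hid1 : (c - s) ^ 2 / 2 - κ / 4 * (c ^ 4 + s ^ 4) + κ/8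
      = (1/2 - s*c) * (1 - κ/2*(s*c + 1/2)) := by
    linear_combination (1/2 - κ/4*(s^2 + c^2 + 1)) * hpyth
  have hid2 : 1 - κ/8 - ((c - s) ^ 2 / 2 - κ / 4 * (c ^ 4 + s ^ 4))
      = (s*c + 1/2) * (1 + κ/2*(1/2 - s*c)) := by
    linear_combination (κ/4*(s^2 + c^2 + 1) - 1/2) * hpyth
  constructor <;> linarith [key1, key2, hid1.ge, hid2.ge, hid1.le, hid2.le]
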